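/- Let x ∈ (0,1)^d with d ≥ 2, and suppose there exist y with y_1 > x_1, y_j < x_j for j ≥ 2, and y_1 < 2x_1 − (x_1/x_2) y_2, and z with z_2 > x_2, z_j < x_j for j ≠ 2, and z_2 < 2x_2 − (x_2/x_1) z_1. Define ỹ = (y_1, 2x_2 − (x_2/x_1) y_1, x_3, ..., x_d) and z̃ = (2x_1 − (x_1/x_2) z_2, z_2, x_3, ..., x_d). Then y ≤ ỹ and z ≤ z̃ coordinatewise, and there exists α ∈ (0,1) with x = α ỹ + (1−α) z̃; hence x lies in the interior of the convex hull of (y + R_+^d) ∪ (z + R_+^d). -/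

import Mathlib

/-- Geometric core of Lemma 3: if `y ∈ B₁` and `z ∈ B₂` (regions dominating `x`),
then with `ỹ = (y₀, 2x₁ − (x₁/x₀)y₀, x₂, …)` and `z̃ = (2x₀ − (x₀/x₁)z₁, z₁, x₂, …)`
we have `y ≤ ỹ`, `z ≤ z̃`, `x` is a strict convex combination of `ỹ` and `z̃`, and
`x` lies in the interior of the convex hull of `(y + ℝ₊^d) ∪ (z + ℝ₊^d)`. -/
theorem stmt11 (d : ℕ) (x y z : Fin (d + 2) → ℝ)
    (hx : ∀ k, 0 < x k ∧ x k < 1)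
    (hy0 : x 0 < y 0) (hyj : ∀ j, j ≠ 0 → y j < x j)
    (hy1 : y 0 < 2 * x 0 - x 0 / x 1 * y 1)
    (hz1 : x 1 < z 1) (hzj : ∀ j, j ≠ 1 → z j < x j)
    (hz0 : z 1 < 2 * x 1 - x 1 / x 0 * z 0) :
    (∀ k, y k ≤ (fun k : Fin (d + 2) =>
        if k = 0 then y 0 else if k = 1 then 2 * x 1 - x 1 / x 0 * y 0 else x k) k) ∧
    (∀ k, z k ≤ (fun k : Fin (d + 2) =>
        if k = 0 then 2 * x 0 - x 0 / x 1 * z 1 else if k = 1 then z 1 else x k) k) ∧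
    (∃ α : ℝ, 0 < α ∧ α < 1 ∧
      x = α • (fun k : Fin (d + 2) =>
          if k = 0 then y 0 else if k = 1 then 2 * x 1 - x 1 / x 0 * y 0 else x k) +
        (1 - α) • (fun k : Fin (d + 2) =>
          if k = 0 then 2 * x 0 - x 0 / x 1 * z 1 else if k = 1 then z 1 else x k)) ∧
    x ∈ interior (convexHull ℝ
      ({v : Fin (d + 2) → ℝ | ∀ k, y k ≤ v k} ∪ {v : Fin (d + 2) → ℝ | ∀ k, z k ≤ v k})) := by
  obtain ⟨hx0, _⟩ := hx 0
  obtain ⟨hx1, _⟩ := hx 1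
  have h01 : (0 : Fin (d + 2)) ≠ 1 := by simp [Fin.ext_iff]
  have h10 : (1 : Fin (d + 2)) ≠ 0 := Ne.symm h01
  -- the mirrored strict inequality for y
  have key : ∀ u v a b : ℝ, 0 < u → 0 < v → a < 2 * u - u / v * b → b < 2 * v - v / u * a := by
    intro u v a b hu hv h
    have h' : u * b < (2 * u - a) * v := by
      rw [← div_lt_iff₀ hv, ← div_mul_eq_mul_div]; linarith
    have h2 : v / u * a < 2 * v - b := by
      rw [div_mul_eq_mul_div, div_lt_iff₀ hu]; nlinarith
    linarith
  have hy1' : y 1 < 2 * x 1 - x 1 / x 0 * y 0 := key _ _ _ _ hx0 hx1 hy1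
  have hz0' : z 0 < 2 * x 0 - x 0 / x 1 * z 1 := key _ _ _ _ hx1 hx0 hz0
  -- abbreviations
  set Y1 : ℝ := 2 * x 1 - x 1 / x 0 * y 0 with hY1
  set Z0 : ℝ := 2 * x 0 - x 0 / x 1 * z 1 with hZ0
  clear_value Y1 Z0
  have hY1m : x 0 * Y1 = 2 * x 0 * x 1 - x 1 * y 0 := by
    rw [hY1]; field_simp; try ring
  have hZ0m : x 1 * Z0 = 2 * x 0 * x 1 - x 0 * z 1 := by
    rw [hZ0]; field_simp; try ring
  have hZ0x : Z0 < x 0 := by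
    have h : x 0 < x 0 / x 1 * z 1 := by
      rw [div_mul_eq_mul_div, lt_div_iff₀ hx1]; nlinarith
    rw [hZ0]; linarith
  have hya : Z0 < y 0 := lt_trans hZ0x hy0
  have hne : y 0 - Z0 ≠ 0 := by intro h; nlinarith
  set α : ℝ := (x 0 - Z0) / (y 0 - Z0) with hα
  clear_value α
  have hα0 : 0 < α := by rw [hα]; exact div_pos (by linarith) (by linarith)
  have hα1 : α < 1 := by rw [hα]; exact (div_lt_one (by linarith)).2 (by linarith)
  have hα' : α * (y 0 - Z0) = x 0 - Z0 := by
    rw [hα]; field_simp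
  -- coordinate identities
  have id0 : α * y 0 + (1 - α) * Z0 = x 0 := by linear_combination hα'
  have id1 : α * Y1 + (1 - α) * z 1 = x 1 := by
    have id1' : x 0 * x 1 * (α * Y1 + (1 - α) * z 1) = x 0 * x 1 * x 1 := by
      linear_combination (α * x 1) * hY1m - (x 1) ^ 2 * hα' + (1 - α) * x 1 * hZ0m
    exact mul_left_cancel₀ (mul_ne_zero hx0.ne' hx1.ne') id1'
  refine ⟨?_, ?_, ?_, ?_⟩
  · intro k
    by_cases hk0 : k = 0
    · subst hk0; simp
    · by_cases hk1 : k = 1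
      · subst hk1; simp [h10]; linarith
      · simp only [if_neg hk0, if_neg hk1]; exact (hyj k hk0).le
  · intro k
    by_cases hk0 : k = 0
    · subst hk0; simp; linarith
    · by_cases hk1 : k = 1
      · subst hk1; simp [h10]
      · simp only [if_neg hk0, if_neg hk1]; exact (hzj k hk1).le
  · refine ⟨α, hα0, hα1, ?_⟩
    funext k
    simp only [Pi.add_apply, Pi.smul_apply, smul_eq_mul]
    by_cases hk0 : k = 0
    · subst hk0; simp; linarith [id0]
    · by_cases hk1 : k = 1
      · subst hk1; simp [h10]; linarith [id1]
      · simp only [if_neg hk0, if_neg hk1]; ring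
  · -- interior membership
    set S := convexHull ℝ
      ({v : Fin (d + 2) → ℝ | ∀ k, y k ≤ v k} ∪ {v : Fin (d + 2) → ℝ | ∀ k, z k ≤ v k}) with hS
    have hconv : Convex ℝ S := convex_convexHull ℝ _
    -- perturbation amounts
    obtain ⟨δ, hδ⟩ : ∃ t : ℝ, t = (Z0 - z 0) / 2 := ⟨_, rfl⟩
    obtain ⟨δ', hδ'⟩ : ∃ t : ℝ, t = (Y1 - y 1) / 2 := ⟨_, rfl⟩
    have hδpos : 0 < δ := by rw [hδ]; linarith
    have hδ'pos : 0 < δ' := by rw [hδ']; linarith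
    set a : Fin (d + 2) → ℝ := fun k =>
      if k = 0 then y 0 + (1 - α) / α * δ else if k = 1 then Y1 - δ' else x k with ha
    set b : Fin (d + 2) → ℝ := fun k =>
      if k = 0 then Z0 - δ else if k = 1 then z 1 + α / (1 - α) * δ' else x k with hb
    -- a is in the open set {v | ∀ k, y k < v k}
    have haopen : ∀ k, y k < a k := by
      intro k
      by_cases hk0 : k = 0
      · subst hk0
        have h : 0 < (1 - α) / α * δ := mul_pos (div_pos (by linarith) hα0) hδpos
        simp [ha]; linarith
      · by_cases hk1 : k = 1
        · subst hk1; simp [ha, h10]; rw [hδ']; linarith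
        · simp only [ha, if_neg hk0, if_neg hk1]; exact hyj k hk0
    have hbmem : ∀ k, z k ≤ b k := by
      intro k
      by_cases hk0 : k = 0
      · subst hk0
        have h := hzj 0 h01
        simp [hb]; rw [hδ]; linarith
      · by_cases hk1 : k = 1
        · subst hk1
          have h : 0 ≤ α / (1 - α) * δ' :=
            le_of_lt (mul_pos (div_pos hα0 (by linarith)) hδ'pos)
          simp [hb, h10]; linarith
        · simp only [hb, if_neg hk0, if_neg hk1]; exact (hzj k hk1).le
    -- the open set is contained in S
    have hopen : IsOpen {v : Fin (d + 2) → ℝ | ∀ k, y k < v k} := by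
      have h : {v : Fin (d + 2) → ℝ | ∀ k, y k < v k}
          = Set.pi Set.univ (fun k => Set.Ioi (y k)) := by
        ext v; simp [Set.mem_pi]
      rw [h]
      exact isOpen_set_pi Set.finite_univ (fun k _ => isOpen_Ioi)
    have hsub : {v : Fin (d + 2) → ℝ | ∀ k, y k < v k} ⊆ S := by
      refine Set.Subset.trans ?_ (subset_convexHull ℝ _)
      intro v hv
      exact Set.mem_union_left _ (fun k => (hv k).le)
    have haint : a ∈ interior S := interior_maximal hsub hopen haopen
    have hbS : b ∈ S := subset_convexHull ℝ _ (Set.mem_union_right _ hbmem)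
    have hcombo : x = α • a + (1 - α) • b := by
      funext k
      simp only [Pi.add_apply, Pi.smul_apply, smul_eq_mul]
      by_cases hk0 : k = 0
      · subst hk0
        have e1 : α * (y 0 + (1 - α) / α * δ) = α * y 0 + (1 - α) * δ := by
          field_simp
        simp only [ha, hb, if_pos rfl, if_true, ite_true]
        rw [e1]; linarith [id0]
      · by_cases hk1 : k = 1
        · subst hk1
          have hne1 : (1 : ℝ) - α ≠ 0 := by linarith
          have e1 : (1 - α) * (z 1 + α / (1 - α) * δ') = (1 - α) * z 1 + α * δ' := by
            field_simp
          simp only [ha, hb, if_neg h10, if_pos rfl, if_true, ite_true]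
          rw [e1]; linarith [id1]
        · simp only [ha, hb, if_neg hk0, if_neg hk1]; ring
    rw [hcombo]
    exact hconv.combo_interior_self_mem_interior haint hbS hα0 (by linarith) (by ring)
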